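/- Let ξ, η ∈ C_c²((0,∞)) and let (Kξ)(t) = t·ξ(t). Then there is a compact set S ⊂ (0,∞) such that (ξ *₊ η)(b,a) = 0 whenever a ∉ S; and for every a > 0, the function b ↦ (ξ *₊ η)(b,a) is integrable on ℝ with ∫_ℝ |(ξ *₊ η)(b,a)| db ≤ ‖𝓕u‖_{L¹(ℝ)} · ‖𝓕v‖_{L¹(ℝ)}, where u, v : ℝ → ℂ are the extensions by zero of ξ and of t ↦ t⁻¹·conj(η(t)) respectively, and 𝓕 denotes the Fourier transform on ℝ, 𝓕f(b) = ∫_ℝ f(x) e^{−2πi b x} dx. -/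

import Mathlib

open MeasureTheory Set

/-- Coefficient function of the representation `π₊` of the real `ax+b` group:
`(ξ *₊ η)(b,a) = ∫₀^∞ e^{-2πibt} ξ(at) conj(η(t)) t⁻¹ dt`. -/
noncomputable def coeffP (ξ η : ℝ → ℂ) (b a : ℝ) : ℂ :=
  ∫ t in Ioi (0 : ℝ),
    Complex.exp (-(2 * Real.pi * b * t : ℝ) * Complex.I) * ξ (a * t)
      * starRingEnd ℂ (η t) * (t : ℂ)⁻¹

/-- Coefficient function of the representation `π₋` of the real `ax+b` group:
`(ξ *₋ η)(b,a) = ∫₀^∞ e^{2πibt} ξ(at) conj(η(t)) t⁻¹ dt`. -/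
noncomputable def coeffM (ξ η : ℝ → ℂ) (b a : ℝ) : ℂ :=
  ∫ t in Ioi (0 : ℝ),
    Complex.exp ((2 * Real.pi * b * t : ℝ) * Complex.I) * ξ (a * t)
      * starRingEnd ℂ (η t) * (t : ℂ)⁻¹

/-- `C_c²((0,∞))`: twice continuously differentiable complex-valued functions on `ℝ`
with compact support contained in `(0,∞)`. -/
def CcTwo (f : ℝ → ℂ) : Prop :=
  ContDiff ℝ 2 f ∧ HasCompactSupport f ∧ tsupport f ⊆ Ioi (0 : ℝ)

/-- Left Haar measure `a⁻² db da` of the `ax+b` group, modelled on `ℝ × (0,∞)`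
(first coordinate `b`, second coordinate `a`). -/
noncomputable def muG : Measure (ℝ × ℝ) :=
  (((volume : Measure ℝ).prod ((volume : Measure ℝ).restrict (Ioi (0 : ℝ)))).withDensity
    fun p => ENNReal.ofReal ((p.2 ^ 2)⁻¹))

open Complex FourierTransform Real
open scoped Convolution

section Aux

lemma fourier_L1_aux {f : ℝ → ℂ} (hf : ContDiff ℝ 2 f) (hc : HasCompactSupport f) :
    Integrable (𝓕 f) := by
  have h := contDiff_succ_iff_deriv.mp (by exact_mod_cast hf : ContDiff ℝ (1+1) f)
  have hdiff : Differentiable ℝ f := h.1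
  have h1 : ContDiff ℝ 1 (deriv f) := h.2.2
  have h' := contDiff_one_iff_deriv.mp h1
  have hc1 : HasCompactSupport (deriv f) := hc.deriv
  have hc2 : HasCompactSupport (deriv (deriv f)) := hc1.deriv
  have hfi : Integrable f := hf.continuous.integrable_of_hasCompactSupport hc
  have hfi1 : Integrable (deriv f) := h1.continuous.integrable_of_hasCompactSupport hc1
  have hfi2 : Integrable (deriv (deriv f)) := h'.2.integrable_of_hasCompactSupport hc2
  have key : ∀ x : ℝ, 𝓕 (deriv (deriv f)) x = (2 * π * I * x) • ((2 * π * I * x) • 𝓕 f x) := by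
    intro x
    rw [Real.fourier_deriv hfi1 h'.1 hfi2, Real.fourier_deriv hfi hdiff hfi1]
  have hb : ∀ x : ℝ, ‖𝓕 f x‖ ≤ ((∫ t, ‖f t‖) + ∫ t, ‖deriv (deriv f) t‖) * (1 + x ^ 2)⁻¹ := by
    intro x
    have e1 : ‖𝓕 f x‖ ≤ ∫ t, ‖f t‖ :=
      VectorFourier.norm_fourierIntegral_le_integral_norm _ _ _ _ _
    have e2 : ‖𝓕 (deriv (deriv f)) x‖ ≤ ∫ t, ‖deriv (deriv f) t‖ :=
      VectorFourier.norm_fourierIntegral_le_integral_norm _ _ _ _ _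
    have e3 : ‖𝓕 (deriv (deriv f)) x‖ = (2*π*|x|)^2 * ‖𝓕 f x‖ := by
      rw [key x]
      simp [norm_smul, _root_.abs_of_nonneg Real.pi_pos.le]
      ring_nf
    have hx2 : x ^ 2 * ‖𝓕 f x‖ ≤ ∫ t, ‖deriv (deriv f) t‖ := by
      refine le_trans ?_ (e3 ▸ e2)
      have h1 : (1:ℝ) ≤ 2 * π := by nlinarith [Real.pi_gt_three]
      have e4 : (2*π*|x|)^2 = 4*π^2*x^2 := by rw [mul_pow, mul_pow, _root_.sq_abs]; ring
      have h2 : (1:ℝ) ≤ 4*π^2 := by nlinarith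
      rw [e4]
      nlinarith [norm_nonneg (𝓕 f x), sq_nonneg x, mul_nonneg (sq_nonneg x) (norm_nonneg (𝓕 f x))]
    have hpos : (0:ℝ) < 1 + x ^ 2 := by positivity
    rw [← div_eq_mul_inv, le_div_iff₀ hpos]
    nlinarith [norm_nonneg (𝓕 f x)]
  have hcont : Continuous (𝓕 f) :=
    VectorFourier.fourierIntegral_continuous Real.continuous_fourierChar (by exact continuous_inner) hfi
  refine (integrable_inv_one_add_sq.const_mul
      ((∫ t, ‖f t‖) + ∫ t, ‖deriv (deriv f) t‖)).mono' hcont.aestronglyMeasurable ?_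
  exact ae_of_all _ hb

lemma gsmooth {η : ℝ → ℂ} (h2 : ContDiff ℝ 2 η) (hs : tsupport η ⊆ Ioi (0:ℝ)) :
    ContDiff ℝ 2 (fun t : ℝ => (t:ℂ)⁻¹ * starRingEnd ℂ (η t)) := by
  rw [contDiff_iff_contDiffAt]
  intro t
  rcases ne_or_eq t 0 with ht | rfl
  · have hre : ContDiffAt ℝ 2 (fun s : ℝ => (s:ℂ)) t := Complex.ofRealCLM.contDiff.contDiffAt
    have hinv : ContDiffAt ℝ 2 (fun s : ℝ => (s:ℂ)⁻¹) t :=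
      hre.inv (by exact_mod_cast ht)
    exact hinv.mul ((Complex.conjCLE.contDiff.contDiffAt).comp t h2.contDiffAt)
  · have h0 : (0:ℝ) ∉ tsupport η := fun h => lt_irrefl 0 (mem_Ioi.mp (hs h))
    have h1 : ∀ᶠ s : ℝ in nhds 0, η s = 0 := by
      filter_upwards [(isClosed_tsupport η).isOpen_compl.mem_nhds h0] with s hsn
      exact image_eq_zero_of_notMem_tsupport hsn
    have h2' : (fun s : ℝ => (s:ℂ)⁻¹ * starRingEnd ℂ (η s)) =ᶠ[nhds 0] fun _ => (0:ℂ) := by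
      filter_upwards [h1] with s hz; simp [hz]
    exact (contDiffAt_const (c := (0:ℂ))).congr_of_eventuallyEq h2'

lemma gsupp {η : ℝ → ℂ} (hc : HasCompactSupport η) :
    HasCompactSupport (fun t : ℝ => (t:ℂ)⁻¹ * starRingEnd ℂ (η t)) := by
  apply hc.mono
  intro t ht
  simp only [Function.mem_support, ne_eq] at ht ⊢
  intro h; exact ht (by simp [h])

lemma fourier_mul_eq_conv {f g : ℝ → ℂ} (hf2 : ContDiff ℝ 2 f) (hfc : HasCompactSupport f)
    (hg2 : ContDiff ℝ 2 g) (hgc : HasCompactSupport g) (b : ℝ) :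
    𝓕 (fun t => f t * g t) b = ∫ s : ℝ, 𝓕 f s * 𝓕 g (b - s) := by
  have hfi : Integrable f := hf2.continuous.integrable_of_hasCompactSupport hfc
  have hgi : Integrable g := hg2.continuous.integrable_of_hasCompactSupport hgc
  have hFi : Integrable (𝓕 f) := fourier_L1_aux hf2 hfc
  have hFc : Continuous (𝓕 f) :=
    VectorFourier.fourierIntegral_continuous Real.continuous_fourierChar (by exact continuous_inner) hfi
  have inv : ∀ t : ℝ, f t = ∫ s : ℝ, Complex.exp (↑(2 * π * s * t) * I) * 𝓕 f s := by
    intro t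
    have h := hfi.fourierInv_fourier_eq hFi (hf2.continuous.continuousAt (x := t))
    rw [← h, Real.fourierInv_eq']
    congr 1; ext s
    simp only [RCLike.inner_apply, conj_trivial, smul_eq_mul]
    congr 3
    push_cast; ring
  set H : ℝ × ℝ → ℂ :=
    fun z => 𝓕 f z.2 * (Complex.exp (↑(-2 * π * z.1 * (b - z.2)) * I) * g z.1) with hH
  have hHmeas : Continuous H := by
    apply (hFc.comp continuous_snd).mul
    apply Continuous.mul _ (hg2.continuous.comp continuous_fst)
    apply Complex.continuous_exp.comp
    apply Continuous.mul _ continuous_const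
    continuity
  have hHint : Integrable H (volume.prod volume) := by
    refine (hgi.norm.mul_prod hFi.norm).mono' hHmeas.aestronglyMeasurable ?_
    refine ae_of_all _ fun z => ?_
    rw [hH]
    simp only [norm_mul, Complex.norm_exp_ofReal_mul_I, one_mul]
    rw [mul_comm]
  have step1 : 𝓕 (fun t => f t * g t) b = ∫ t : ℝ, ∫ s : ℝ, H (t, s) := by
    rw [Real.fourier_real_eq_integral_exp_smul]
    congr 1; ext t
    rw [smul_eq_mul, inv t, ← integral_mul_const, ← integral_const_mul]
    congr 1; ext s
    rw [hH]
    simp only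
    have hexp : Complex.exp (↑(-2 * π * t * b) * I) * Complex.exp (↑(2 * π * s * t) * I)
        = Complex.exp (↑(-2 * π * t * (b - s)) * I) := by
      rw [← Complex.exp_add]; congr 1; push_cast; ring
    rw [← hexp]; ring
  have step2 : (∫ t : ℝ, ∫ s : ℝ, H (t, s)) = ∫ s : ℝ, ∫ t : ℝ, H (t, s) :=
    integral_integral_swap (by exact hHint)
  rw [step1, step2]
  congr 1; ext s
  rw [hH]
  simp only
  rw [integral_const_mul, Real.fourier_real_eq_integral_exp_smul]
  congr 1
  congr 1; ext t
  rw [Circle.smul_def, Real.fourierChar_apply]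
  congr 2
  simp only [innerₗ_apply_apply, LinearMap.flip_apply, RCLike.inner_apply, conj_trivial]
  push_cast; ring

lemma scaled_eq (ξ : ℝ → ℂ) {a : ℝ} (ha : 0 < a) (s : ℝ) :
    𝓕 (fun t => ξ (a * t)) s = |a⁻¹| • 𝓕 ξ (s / a) := by
  rw [Real.fourier_real_eq_integral_exp_smul, Real.fourier_real_eq_integral_exp_smul]
  have key : (∫ t : ℝ, Complex.exp (↑(-2 * π * t * s) * I) • ξ (a * t))
      = ∫ t : ℝ, (fun u : ℝ => Complex.exp (↑(-2 * π * u * (s / a)) * I) • ξ u) (a * t) := by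
    congr 1; ext t
    simp only
    congr 3
    push_cast
    have ha' : (a:ℂ) ≠ 0 := Complex.ofReal_ne_zero.mpr ha.ne'
    field_simp
  rw [key, MeasureTheory.Measure.integral_comp_mul_left
    (fun u : ℝ => Complex.exp (↑(-2 * π * u * (s / a)) * I) • ξ u) a]

lemma scaled_norm (ξ : ℝ → ℂ) {a : ℝ} (ha : 0 < a) :
    (∫ s : ℝ, ‖𝓕 (fun t => ξ (a * t)) s‖) = ∫ s : ℝ, ‖𝓕 ξ s‖ := by
  have h1 : (∫ s : ℝ, ‖𝓕 (fun t => ξ (a * t)) s‖)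
      = ∫ s : ℝ, |a⁻¹| * ‖𝓕 ξ (s / a)‖ := by
    congr 1; ext s
    rw [scaled_eq ξ ha s, norm_smul, Real.norm_eq_abs, _root_.abs_abs]
  rw [h1, integral_const_mul, MeasureTheory.Measure.integral_comp_div (fun x => ‖𝓕 ξ x‖) a]
  rw [smul_eq_mul, ← mul_assoc, abs_inv, inv_mul_cancel₀ (by positivity), one_mul]

end Aux

/-- Support and uniform-in-`a` `L¹` bound for convenient coefficient functions
(proof of Lemma 4.3 of Choi–Ghandehari).  For `ξ, η ∈ C_c²((0,∞))` there is a compact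
set `S ⊂ (0,∞)` outside of which `ξ *₊ η` vanishes, and for each `a > 0` the function
`b ↦ (ξ *₊ η)(b,a)` is integrable with `L¹`-norm at most
`‖𝓕ξ‖_{L¹} ⬝ ‖𝓕(t ↦ t⁻¹ conj(η t))‖_{L¹}`.  (Note that since `ξ` and `η` are supported
in `(0,∞)`, and `(0:ℝ)⁻¹ = 0` in Lean, the functions `ξ` and `t ↦ t⁻¹ ⬝ conj (η t)`
are already equal to the extensions by zero described in the paper.) -/
theorem coefficient_function_support_and_L1_bound (ξ η : ℝ → ℂ)
    (hξ : CcTwo ξ) (hη : CcTwo η) :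
    ∃ S : Set ℝ, IsCompact S ∧ S ⊆ Ioi (0 : ℝ) ∧
      (∀ a : ℝ, a ∉ S → ∀ b : ℝ, coeffP ξ η b a = 0) ∧
      (∀ a : ℝ, 0 < a →
        Integrable (fun b : ℝ => coeffP ξ η b a) volume ∧
        (∫ b : ℝ, ‖coeffP ξ η b a‖) ≤
          (∫ b : ℝ, ‖FourierTransform.fourier ξ b‖) *
          (∫ b : ℝ, ‖FourierTransform.fourier
              (fun t : ℝ => (t : ℂ)⁻¹ * starRingEnd ℂ (η t)) b‖)) := by
  obtain ⟨hξ2, hξc, hξs⟩ := hξ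
  obtain ⟨hη2, hηc, hηs⟩ := hη
  refine ⟨(fun p : ℝ × ℝ => p.1 / p.2) '' (tsupport ξ ×ˢ tsupport η), ?_, ?_, ?_, ?_⟩
  · exact (hξc.prod hηc).image_of_continuousOn <|
      ContinuousOn.div continuousOn_fst continuousOn_snd
        (fun p hp => (mem_Ioi.mp (hηs hp.2)).ne')
  · rintro x ⟨⟨u, t⟩, ⟨hu, ht⟩, rfl⟩
    exact mem_Ioi.mpr (div_pos (mem_Ioi.mp (hξs hu)) (mem_Ioi.mp (hηs ht)))
  · intro a ha b
    rw [coeffP]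
    rw [show (0:ℂ) = ∫ t in Ioi (0:ℝ), (0:ℂ) by simp]
    apply setIntegral_congr_fun measurableSet_Ioi
    intro t ht
    by_cases hηt : η t = 0
    · simp [hηt]
    by_cases hξt : ξ (a * t) = 0
    · simp [hξt]
    exfalso
    apply ha
    refine ⟨(a * t, t), ⟨subset_tsupport ξ hξt, subset_tsupport η hηt⟩, ?_⟩
    have ht0 : t ≠ 0 := (mem_Ioi.mp ht).ne'
    field_simp
  · intro a ha
    set f : ℝ → ℂ := fun t => ξ (a * t) with hf
    set g : ℝ → ℂ := fun t => (t:ℂ)⁻¹ * starRingEnd ℂ (η t) with hg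
    have hf2 : ContDiff ℝ 2 f := hξ2.comp (contDiff_const.mul contDiff_id)
    have hfc : HasCompactSupport f := hξc.comp_homeomorph (Homeomorph.mulLeft₀ a ha.ne')
    have hg2 : ContDiff ℝ 2 g := gsmooth hη2 hηs
    have hgc : HasCompactSupport g := gsupp hηc
    have hFi : Integrable (𝓕 f) := fourier_L1_aux hf2 hfc
    have hGi : Integrable (𝓕 g) := fourier_L1_aux hg2 hgc
    set L := ContinuousLinearMap.mul ℝ ℂ with hL
    have eq1 : ∀ b : ℝ, coeffP ξ η b a = (𝓕 f ⋆[L] 𝓕 g) b := by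
      intro b
      rw [convolution_def]
      have e0 : coeffP ξ η b a = 𝓕 (fun t => f t * g t) b := by
        rw [coeffP]
        rw [setIntegral_eq_integral_of_forall_compl_eq_zero (fun t ht => ?_)]
        · rw [Real.fourier_real_eq_integral_exp_smul]
          congr 1; ext t
          rw [smul_eq_mul, hf, hg]
          simp only
          have hexp : Complex.exp (-(2 * π * b * t : ℝ) * I)
              = Complex.exp (((-2 * π * t * b : ℝ) : ℂ) * I) := by
            congr 2; push_cast; ring
          rw [hexp]; ring
        · have : η t = 0 := by
            apply image_eq_zero_of_notMem_tsupport
            intro hmem; exact ht (hηs hmem)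
          simp [this]
      rw [e0, fourier_mul_eq_conv hf2 hfc hg2 hgc b]
      congr 1
    have hconv : Integrable (𝓕 f ⋆[L] 𝓕 g) := hFi.integrable_convolution L hGi
    have hint : Integrable (fun b : ℝ => coeffP ξ η b a) volume :=
      hconv.congr (ae_of_all _ fun b => (eq1 b).symm)
    refine ⟨hint, ?_⟩
    have hnormint : ∀ b, ‖coeffP ξ η b a‖ = ‖(𝓕 f ⋆[L] 𝓕 g) b‖ := fun b => by rw [eq1 b]
    calc (∫ b : ℝ, ‖coeffP ξ η b a‖) = ∫ b : ℝ, ‖(𝓕 f ⋆[L] 𝓕 g) b‖ := by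
          congr 1; ext b; exact hnormint b
      _ ≤ ∫ b : ℝ, ((fun x => ‖𝓕 f x‖) ⋆[ContinuousLinearMap.lsmul ℝ ℝ] fun x => ‖𝓕 g x‖) b := by
          apply integral_mono_ae hconv.norm
            (hFi.norm.integrable_convolution (ContinuousLinearMap.lsmul ℝ ℝ) hGi.norm)
          filter_upwards [hFi.norm.ae_convolution_exists (ContinuousLinearMap.lsmul ℝ ℝ) hGi.norm]
            with b hb
          rw [convolution_def, convolution_def]
          refine le_trans (norm_integral_le_integral_norm _) ?_
          apply integral_mono_of_nonneg (ae_of_all _ fun t => norm_nonneg _) hb.integrable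
          refine ae_of_all _ fun t => ?_
          simp only [hL, ContinuousLinearMap.mul_apply', ContinuousLinearMap.lsmul_apply,
            smul_eq_mul]
          exact le_of_eq (norm_mul _ _)
      _ = (∫ b : ℝ, ‖𝓕 f b‖) * ∫ b : ℝ, ‖𝓕 g b‖ := by
          rw [integral_convolution (ContinuousLinearMap.lsmul ℝ ℝ) hFi.norm hGi.norm]
          simp [smul_eq_mul]
      _ = (∫ b : ℝ, ‖𝓕 ξ b‖) * ∫ b : ℝ, ‖𝓕 g b‖ := by
          rw [scaled_norm ξ ha]
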